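/- For every natural number k ≥ 1, the set of natural numbers n with Cₙ ≡ 0 (mod 2^k) has asymptotic density 1; that is, the limit as N → ∞ of (1/N)·#{n < N : Cₙ ≡ 0 mod 2^k} equals 1. -/

import Mathlib

open Filter

private lemma sumdig (m : ℕ) :
    (Nat.digits 2 m).sum = m % 2 + (Nat.digits 2 (m / 2)).sum := by
  rcases Nat.eq_zero_or_pos m with rfl | hm
  · simp
  · rw [Nat.digits_def' (by norm_num : 1 < 2) hm]
    simp

private lemma catalan_ne_zero (n : ℕ) : catalan n ≠ 0 := by
  intro h
  have := succ_mul_catalan_eq_centralBinom n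
  rw [h, mul_zero] at this
  exact (Nat.centralBinom_pos n).ne' this.symm

private lemma val_factorial (n : ℕ) :
    padicValNat 2 (Nat.factorial n) = n - (Nat.digits 2 n).sum := by
  have := sub_one_mul_padicValNat_factorial (p:=2) n
  simpa using this

/-- Key valuation identity: ν₂(catalan n) + 1 = s₂(n+1). -/
private lemma val_catalan (n : ℕ) :
    padicValNat 2 (catalan n) + 1 = (Nat.digits 2 (n + 1)).sum := by
  have hsn : (Nat.digits 2 n).sum ≤ n := Nat.digit_sum_le 2 n
  have hsn1 : (Nat.digits 2 (n + 1)).sum ≤ n + 1 := Nat.digit_sum_le 2 (n + 1)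
  -- ν₂(n+1) + ν₂(n!) = ν₂((n+1)!)
  have hfac : padicValNat 2 (Nat.factorial (n+1)) = padicValNat 2 (n + 1) + padicValNat 2 (Nat.factorial n) := by
    rw [Nat.factorial_succ]
    exact padicValNat.mul (Nat.succ_ne_zero n) (Nat.factorial_ne_zero n)
  rw [val_factorial, val_factorial] at hfac
  -- ν₂(n+1) + s(n+1) = s(n) + 1
  have hkey : padicValNat 2 (n + 1) + (Nat.digits 2 (n + 1)).sum = (Nat.digits 2 n).sum + 1 := by
    omega
  -- ν₂(choose (n+n) n) = 2 s(n) - s(n+n)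
  have hch := sub_one_mul_padicValNat_choose_eq_sub_sum_digits' (p:=2) (k:=n) (n:=n)
  -- s(n+n) = s(n) since n+n = 2n
  have h2n : (Nat.digits 2 (n + n)).sum = (Nat.digits 2 n).sum := by
    rw [sumdig (n + n)]
    have h1 : (n + n) % 2 = 0 := by omega
    have h2 : (n + n) / 2 = n := by omega
    rw [h1, h2]; ring
  rw [h2n] at hch
  simp only [show (2 : ℕ) - 1 = 1 from rfl, one_mul] at hch
  have hch' : padicValNat 2 ((n + n).choose n) = (Nat.digits 2 n).sum := by omega
  -- (n+1) * catalan n = centralBinom n = choose (n+n) n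
  have hcb : (n + 1) * catalan n = (n + n).choose n := by
    rw [succ_mul_catalan_eq_centralBinom, Nat.centralBinom, two_mul]
  have hmul : padicValNat 2 (n + 1) + padicValNat 2 (catalan n)
      = padicValNat 2 ((n + 1) * catalan n) :=
    (padicValNat.mul (Nat.succ_ne_zero n) (catalan_ne_zero n)).symm
  rw [hcb, hch'] at hmul
  omega

/-- Numbers below `2^L` with binary digit sum at most `k` number at most `(L+1)^k`. -/
private lemma count_le (L : ℕ) : ∀ j : ℕ,
    ((Finset.range (2 ^ L)).filter (fun m => (Nat.digits 2 m).sum ≤ j)).card ≤ (L + 1) ^ j := by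
  induction L with
  | zero =>
    intro j
    calc ((Finset.range (2 ^ 0)).filter (fun m => (Nat.digits 2 m).sum ≤ j)).card
        ≤ (Finset.range (2 ^ 0)).card := Finset.card_filter_le _ _
      _ = 1 := by simp
      _ ≤ (0 + 1) ^ j := by simp
  | succ L ih =>
    intro j
    set S := (Finset.range (2 ^ (L + 1))).filter (fun m => (Nat.digits 2 m).sum ≤ j) with hS
    have hsplit : (S.filter (fun m => m % 2 = 0)).card
        + (S.filter (fun m => ¬ m % 2 = 0)).card = S.card :=
      Finset.card_filter_add_card_filter_not _
    have heven : (S.filter (fun m => m % 2 = 0)).card ≤ (L + 1) ^ j := by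
      refine le_trans (Finset.card_le_card_of_injOn (fun m => m / 2) ?_ ?_) (ih j)
      · intro m hm
        simp only [hS, Finset.mem_coe, Finset.mem_filter, Finset.mem_range] at hm ⊢
        have hd := sumdig m
        have h2 : (2:ℕ) ^ (L + 1) = 2 * 2 ^ L := by rw [pow_succ]; ring
        exact ⟨by omega, by omega⟩
      · intro a ha b hb hab
        simp only [hS, Finset.coe_filter, Set.mem_setOf_eq] at ha hb
        simp only at hab
        omega
    rcases Nat.eq_zero_or_pos j with rfl | hj
    · have hodd : (S.filter (fun m => ¬ m % 2 = 0)).card = 0 := by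
        rw [Finset.card_eq_zero, Finset.filter_eq_empty_iff]
        intro m hm
        simp only [hS, Finset.mem_filter, Finset.mem_range] at hm
        have hd := sumdig m
        intro h
        omega
      calc S.card = (S.filter (fun m => m % 2 = 0)).card := by omega
        _ ≤ (L + 1) ^ 0 := heven
        _ ≤ (L + 1 + 1) ^ 0 := by simp
    · obtain ⟨i, rfl⟩ : ∃ i, j = 1 + i := ⟨j - 1, by omega⟩
      have hodd : (S.filter (fun m => ¬ m % 2 = 0)).card ≤ (L + 1) ^ i := by
        refine le_trans (Finset.card_le_card_of_injOn (fun m => m / 2) ?_ ?_) (ih i)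
        · intro m hm
          simp only [hS, Finset.mem_coe, Finset.mem_filter, Finset.mem_range] at hm ⊢
          have hd := sumdig m
          have h2 : (2:ℕ) ^ (L + 1) = 2 * 2 ^ L := by rw [pow_succ]; ring
          exact ⟨by omega, by omega⟩
        · intro a ha b hb hab
          simp only [hS, Finset.coe_filter, Set.mem_setOf_eq] at ha hb
          simp only at hab
          omega
      have harith : (L + 1) ^ (1 + i) + (L + 1) ^ i ≤ (L + 1 + 1) ^ (1 + i) := by
        have e1 : (L + 1) ^ (1 + i) + (L + 1) ^ i = (L + 1) ^ i * (L + 2) := by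
          rw [add_comm 1 i, pow_succ]; ring
        have e2 : (L + 1 + 1) ^ (1 + i) = (L + 2) ^ i * (L + 2) := by
          rw [add_comm 1 i, pow_succ]
        rw [e1, e2]
        exact Nat.mul_le_mul_right _ (Nat.pow_le_pow_left (by omega) i)
      omega

/-- For `k ≥ 1`, the set of `n` with `Cₙ ≡ 0 (mod 2^k)` has asymptotic density 1. -/
theorem catalan_modEq_zero_density_one (k : ℕ) (hk : 1 ≤ k) :
    Tendsto (fun N : ℕ =>
        ({n : ℕ | n < N ∧ catalan n ≡ 0 [MOD 2 ^ k]}.ncard : ℝ) / N)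
      atTop (nhds 1) := by
  classical
  have hPiff : ∀ n : ℕ, (catalan n ≡ 0 [MOD 2 ^ k]) ↔ k ≤ padicValNat 2 (catalan n) := by
    intro n
    rw [Nat.modEq_zero_iff_dvd]
    exact padicValNat_dvd_iff_le (catalan_ne_zero n)
  set B : ℕ → ℕ := fun N =>
    ((Finset.range N).filter (fun n => ¬ catalan n ≡ 0 [MOD 2 ^ k])).card with hB
  -- bound on the bad count
  have hbad : ∀ N : ℕ, B N ≤ (Nat.log 2 N + 1 + 1) ^ k := by
    intro N
    refine le_trans (Finset.card_le_card_of_injOn (fun n => n + 1) ?_ ?_)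
      (count_le (Nat.log 2 N + 1) k)
    · intro n hn
      simp only [Finset.mem_coe, Finset.mem_filter, Finset.mem_range] at hn ⊢
      have h1 : N < 2 ^ (Nat.log 2 N + 1) := Nat.lt_pow_succ_log_self (by norm_num) N
      have h2 : padicValNat 2 (catalan n) < k := by
        by_contra h
        exact hn.2 ((hPiff n).2 (by omega))
      have h3 := val_catalan n
      exact ⟨by omega, by omega⟩
    · intro a _ b _ hab
      simpa using hab
  -- geometric decay
  have hgeom : Tendsto (fun m : ℕ => ((m : ℝ)) ^ k * (1/2 : ℝ) ^ m) atTop (nhds 0) :=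
    (summable_pow_mul_geometric_of_norm_lt_one (R := ℝ) k
      (by rw [Real.norm_eq_abs, abs_of_nonneg] <;> norm_num)).tendsto_atTop_zero
  have hg : Tendsto (fun L : ℕ => ((L : ℝ) + 2) ^ k * (1/2 : ℝ) ^ L) atTop (nhds 0) := by
    have h4 := (hgeom.comp (tendsto_add_atTop_nat 2)).const_mul (4 : ℝ)
    rw [mul_zero] at h4
    refine h4.congr (fun L => ?_)
    simp only [Function.comp_apply]
    push_cast
    rw [pow_add]
    ring
  have hlog : Tendsto (fun N : ℕ => Nat.log 2 N) atTop atTop :=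
    tendsto_atTop_atTop.2 fun b =>
      ⟨2 ^ b, fun n hn => Nat.le_log_of_pow_le (by norm_num) hn⟩
  have hcomp : Tendsto
      (fun N : ℕ => ((Nat.log 2 N : ℝ) + 2) ^ k * (1/2 : ℝ) ^ (Nat.log 2 N))
      atTop (nhds 0) := hg.comp hlog
  have hbadto : Tendsto (fun N : ℕ => (B N : ℝ) / N) atTop (nhds 0) := by
    apply squeeze_zero' (Eventually.of_forall fun N => by positivity) ?_ hcomp
    filter_upwards [eventually_ge_atTop 1] with N hN
    have h2N : (2:ℝ) ^ (Nat.log 2 N) ≤ N := by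
      exact_mod_cast Nat.pow_log_le_self 2 (by omega)
    have hbR : (B N : ℝ) ≤ ((Nat.log 2 N : ℝ) + 2) ^ k := by
      have := hbad N
      calc (B N : ℝ) ≤ ((Nat.log 2 N + 1 + 1 : ℕ) : ℝ) ^ k := by exact_mod_cast this
        _ = ((Nat.log 2 N : ℝ) + 2) ^ k := by push_cast; ring_nf
    calc (B N : ℝ) / N ≤ ((Nat.log 2 N : ℝ) + 2) ^ k / (2:ℝ) ^ (Nat.log 2 N) :=
          div_le_div₀ (by positivity) hbR (by positivity) h2N
      _ = ((Nat.log 2 N : ℝ) + 2) ^ k * (1/2 : ℝ) ^ (Nat.log 2 N) := by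
          rw [div_eq_mul_inv, one_div, inv_pow]
  have hmain : Tendsto (fun N : ℕ => 1 - (B N : ℝ) / N) atTop (nhds 1) := by
    have := (tendsto_const_nhds (x := (1:ℝ)) (f := atTop (α := ℕ))).sub hbadto
    rwa [sub_zero] at this
  refine hmain.congr' ?_
  filter_upwards [eventually_ge_atTop 1] with N hN
  have hset : {n : ℕ | n < N ∧ catalan n ≡ 0 [MOD 2 ^ k]}
      = ↑((Finset.range N).filter (fun n => catalan n ≡ 0 [MOD 2 ^ k])) := by
    ext n
    simp [Finset.mem_filter, Finset.mem_range]
  have hsum : ((Finset.range N).filter (fun n => catalan n ≡ 0 [MOD 2 ^ k])).card + B N = N := by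
    rw [hB]
    rw [Finset.card_filter_add_card_filter_not, Finset.card_range]
  have hNR : (N : ℝ) ≠ 0 := by positivity
  have hBle : B N ≤ N := by omega
  have hG : (((Finset.range N).filter (fun n => catalan n ≡ 0 [MOD 2 ^ k])).card : ℝ)
      = (N : ℝ) - B N := by
    have hGe : ((Finset.range N).filter (fun n => catalan n ≡ 0 [MOD 2 ^ k])).card = N - B N := by
      omega
    rw [hGe, Nat.cast_sub hBle]
  rw [hset, Set.ncard_coe_finset, hG, sub_div, div_self hNR]
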